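/- arXiv:1505.03697 — 2 statements merged into one kernel-verified Lean document; each statement's English description precedes it below -/
import Mathlib

section
/- For every d ≥ 1 there exists a one-dimensional tile T ⊂ ℤ that does not tile ℤ^d. Specifically, for k sufficiently large (depending on d), the tile T_k consisting of two intervals of length k at distance k² - 1 apart, with only every k-th point present between them (i.e. T_k = {1,...,k} ∪ {k + jk : 1 ≤ j ≤ k-1} ∪ {k² + k, ..., k² + 2k - 1}), does not tile ℤ^d by copies placed along coordinate directions. -/
def IsCopy {G : Type*} [AddCommGroup G] {d : ℕ} (T : Set G)
    (S : Set (Fin d → G)) : Prop :=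
  ∃ (j : Fin d) (y : Fin d → G),
    S = {z | ∃ t ∈ T, z = Function.update y j (y j + t)}

def Tilable {G : Type*} [AddCommGroup G] {d : ℕ} (T : Set G)
    (X : Set (Fin d → G)) : Prop :=
  ∃ P : Set (Set (Fin d → G)),
    (∀ S ∈ P, IsCopy T S) ∧ P.PairwiseDisjoint id ∧ ⋃₀ P = X

/-- The one-dimensional tile consisting of two intervals of length `k` at
distance `k² - 1` apart, with only every `k`-th point present in between:
`{1,…,k} ∪ {k + jk : 1 ≤ j ≤ k-1} ∪ {k²+k, …, k²+2k-1}`. -/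
def sparseTile (k : ℕ) : Set ℤ :=
  {m : ℤ | (1 ≤ m ∧ m ≤ (k : ℤ)) ∨
    (∃ j : ℤ, 1 ≤ j ∧ j ≤ (k : ℤ) - 1 ∧ m = (k : ℤ) + j * k) ∨
    ((k : ℤ) ^ 2 + k ≤ m ∧ m ≤ (k : ℤ) ^ 2 + 2 * k - 1)}



lemma sparseTile_bounds {k : ℕ} (hk : 1 ≤ k) {t : ℤ} (ht : t ∈ sparseTile k) :
    1 ≤ t ∧ t ≤ (k : ℤ) ^ 2 + 2 * k - 1 := by
  have hk' : (1 : ℤ) ≤ (k : ℤ) := by exact_mod_cast hk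
  rcases ht with ⟨h1, h2⟩ | ⟨j, hj1, hj2, hj3⟩ | ⟨h1, h2⟩
  · constructor <;> nlinarith
  · subst hj3
    constructor <;> nlinarith
  · constructor <;> nlinarith

lemma sparseTile_gap {k : ℕ} (hk : 1 ≤ k) {c : ℤ} (hc1 : 1 ≤ c)
    (hc2 : c ≤ (k : ℤ) ^ 2 + 2 * k - 2) :
    ∃ t' : ℤ, 1 ≤ t' ∧ t' ≤ (k : ℤ) ∧ (c + t') ∈ sparseTile k := by
  have hk' : (1 : ℤ) ≤ (k : ℤ) := by exact_mod_cast hk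
  rcases le_or_gt c ((k:ℤ) - 1) with h | h
  · exact ⟨(k:ℤ) - c, by omega, by omega, Or.inl ⟨by omega, by omega⟩⟩
  rcases le_or_gt c ((k:ℤ) ^ 2 - 1) with h2 | h2
  · -- multiple of k in window
    have hKpos : (0:ℤ) < (k:ℤ) := by omega
    have hmod1 : 0 ≤ c % (k:ℤ) := Int.emod_nonneg c (by omega)
    have hmod2 : c % (k:ℤ) < (k:ℤ) := Int.emod_lt_of_pos c hKpos
    have hdiv : (k:ℤ) * (c / (k:ℤ)) + c % (k:ℤ) = c := Int.mul_ediv_add_emod c (k:ℤ)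
    have hq1 : 1 ≤ c / (k:ℤ) := by nlinarith
    have hq2 : c / (k:ℤ) ≤ (k:ℤ) - 1 := by nlinarith
    refine ⟨(k:ℤ) - c % (k:ℤ), by omega, by omega,
      Or.inr (Or.inl ⟨c / (k:ℤ), hq1, hq2, by linarith [hdiv]⟩)⟩
  · rcases le_or_gt c ((k:ℤ) ^ 2 + (k:ℤ) - 1) with h3 | h3
    · exact ⟨(k:ℤ) ^ 2 + (k:ℤ) - c, by nlinarith, by nlinarith,
        Or.inr (Or.inr ⟨by push_cast; linarith, by nlinarith⟩)⟩
    · exact ⟨1, le_refl 1, hk', Or.inr (Or.inr ⟨by push_cast; nlinarith, by push_cast; nlinarith⟩)⟩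

lemma sparseTile_overlap {k : ℕ} (hk : 1 ≤ k) {a b : ℤ} (hab : a < b)
    (hle : b - a ≤ (k : ℤ) ^ 2 + 2 * k - 2) :
    ∃ t ∈ sparseTile k, ∃ t' ∈ sparseTile k, a + t = b + t' := by
  have hk' : (1 : ℤ) ≤ (k : ℤ) := by exact_mod_cast hk
  obtain ⟨t', h1, h2, h3⟩ := sparseTile_gap hk (c := b - a) (by omega) hle
  exact ⟨b - a + t', h3, t', Or.inl ⟨h1, h2⟩, by ring⟩

lemma sparseTile_finset {k : ℕ} :
    ∃ TF : Finset ℤ, (∀ t ∈ sparseTile k, t ∈ TF) ∧ TF.card ≤ 3 * k := by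
  refine ⟨(Finset.Icc 1 (k : ℤ) ∪ (Finset.Icc (1 : ℤ) ((k : ℤ) - 1)).image
      (fun j => (k : ℤ) + j * k)) ∪ Finset.Icc ((k : ℤ) ^ 2 + k) ((k : ℤ) ^ 2 + 2 * k - 1),
    ?_, ?_⟩
  · intro t ht
    rcases ht with ⟨h1, h2⟩ | ⟨j, hj1, hj2, hj3⟩ | ⟨h1, h2⟩
    · exact Finset.mem_union_left _ (Finset.mem_union_left _ (Finset.mem_Icc.2 ⟨h1, h2⟩))
    · exact Finset.mem_union_left _ (Finset.mem_union_right _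
        (Finset.mem_image.2 ⟨j, Finset.mem_Icc.2 ⟨hj1, hj2⟩, hj3.symm⟩))
    · exact Finset.mem_union_right _ (Finset.mem_Icc.2 ⟨h1, h2⟩)
  · calc _ ≤ (Finset.Icc 1 (k:ℤ) ∪ (Finset.Icc (1:ℤ) ((k:ℤ)-1)).image
          (fun j => (k:ℤ) + j * k)).card
          + (Finset.Icc ((k:ℤ)^2 + k) ((k:ℤ)^2 + 2*k - 1)).card := Finset.card_union_le _ _
      _ ≤ (Finset.Icc 1 (k:ℤ)).card + ((Finset.Icc (1:ℤ) ((k:ℤ)-1)).image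
          (fun j => (k:ℤ) + j * k)).card
          + (Finset.Icc ((k:ℤ)^2 + k) ((k:ℤ)^2 + 2*k - 1)).card := by
            gcongr; exact Finset.card_union_le _ _
      _ ≤ _ := by
        have h1 := Finset.card_image_le (s := Finset.Icc (1:ℤ) ((k:ℤ)-1))
          (f := fun j => (k:ℤ) + j * k)
        simp only [Int.card_Icc] at *
        have e1 : ((k:ℤ) + 1 - 1).toNat = k := by omega
        have e2 : ((k:ℤ) - 1 + 1 - 1).toNat = k - 1 := by omega
        have e3 : ((k:ℤ)^2 + 2*k - 1 + 1 - ((k:ℤ)^2 + k)).toNat = k := by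
          have : (k:ℤ)^2 + 2*k - 1 + 1 - ((k:ℤ)^2 + k) = (k:ℤ) := by ring
          omega
        rw [e1, e3]
        omega

/-- for every `d ≥ 1` there is a one-dimensional tile not
tiling `ℤ^d`; namely `sparseTile k` does not tile `ℤ^d` (by copies along
coordinate directions) once `k` is sufficiently large. -/
theorem sparseTile_does_not_tile (d : ℕ) (hd : 1 ≤ d) :
    ∃ K : ℕ, ∀ k : ℕ, K ≤ k →
      ¬ Tilable (sparseTile k) (Set.univ : Set (Fin d → ℤ)) := by
  classical
  refine ⟨6 * d + 1, fun k hk htile => ?_⟩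
  have hk1 : 1 ≤ k := by omega
  have hk' : (1 : ℤ) ≤ (k : ℤ) := by exact_mod_cast hk1
  obtain ⟨P, hP, hdisj, hcover⟩ := htile
  haveI : Nonempty (Fin d) := ⟨⟨0, by omega⟩⟩
  choose! dir base hSpec using hP
  have hmem : ∀ z : Fin d → ℤ, ∃ S, S ∈ P ∧ z ∈ S := by
    intro z
    have : z ∈ ⋃₀ P := by rw [hcover]; trivial
    exact this
  choose tile htP htz using hmem
  set n : ℕ := k * (k ^ 2 + 2 * k - 1) with hn
  have hnZ : (n : ℤ) = (k : ℤ) * ((k : ℤ) ^ 2 + 2 * (k : ℤ) - 1) := by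
    have h1 : 1 ≤ k ^ 2 + 2 * k := by nlinarith
    rw [hn]
    push_cast [Nat.cast_sub h1]
    ring
  have hspan : (0 : ℤ) < (k : ℤ) ^ 2 + 2 * (k : ℤ) - 1 := by nlinarith
  have hn2 : 2 ≤ n := by nlinarith [hn]
  set B : Finset (Fin d → ℤ) :=
    Fintype.piFinset (fun _ : Fin d => Finset.Icc (0 : ℤ) ((n : ℤ) - 1)) with hB
  have hBcard : B.card = n ^ d := by
    rw [hB, Fintype.card_piFinset]
    simp [Int.card_Icc]
  set label : (Fin d → ℤ) → Fin d × (Fin d → ℤ) :=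
    fun z => (dir (tile z), base (tile z)) with hlabel
  have htileEq : ∀ z : Fin d → ℤ, tile z =
      {w | ∃ t ∈ sparseTile k, w = Function.update (label z).2 (label z).1
        ((label z).2 (label z).1 + t)} := fun z => hSpec _ (htP z)
  have hform : ∀ z : Fin d → ℤ, ∃ t ∈ sparseTile k,
      z = Function.update (label z).2 (label z).1 ((label z).2 (label z).1 + t) := by
    intro z
    have h := htz z
    rw [htileEq z] at h
    exact h
  -- coordinates of z off the direction agree with the base
  have hoff : ∀ z : Fin d → ℤ, ∀ i, i ≠ (label z).1 → z i = (label z).2 i := by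
    intro z i hi
    obtain ⟨t, _, hzt⟩ := hform z
    conv_lhs => rw [hzt]
    rw [Function.update_of_ne hi]
  -- the spacing lemma: two labels in the same direction on the same line
  -- must have offsets at least span apart
  have noclose : ∀ (z1 z2 : Fin d → ℤ) (jj : Fin d) (y1 y2 : Fin d → ℤ),
      label z1 = (jj, y1) → label z2 = (jj, y2) →
      (∀ i, i ≠ jj → y1 i = y2 i) →
      y1 jj < y2 jj →
      y2 jj - y1 jj ≤ (k : ℤ) ^ 2 + 2 * k - 2 →
      False := by
    intro z1 z2 jj y1 y2 hl1 hl2 hline hlt hle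
    obtain ⟨t, htT, t', ht'T, heq⟩ := sparseTile_overlap hk1 hlt hle
    have hne : tile z1 ≠ tile z2 := by
      intro h
      have h12 : label z1 = label z2 := by rw [hlabel]; simp only; rw [h]
      rw [hl1, hl2] at h12
      have : y1 = y2 := congrArg Prod.snd h12
      rw [this] at hlt
      exact lt_irrefl _ hlt
    have hdj := hdisj (htP z1) (htP z2) hne
    set w := Function.update y1 jj (y1 jj + t) with hw
    have hw1 : w ∈ tile z1 := by
      rw [htileEq z1, hl1]
      exact ⟨t, htT, rfl⟩
    have hw2 : w ∈ tile z2 := by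
      rw [htileEq z2, hl2]
      refine ⟨t', ht'T, ?_⟩
      funext i
      by_cases hi : i = jj
      · subst hi
        rw [hw, Function.update_self, Function.update_self, heq]
      · rw [hw, Function.update_of_ne hi, Function.update_of_ne hi, hline i hi]
    exact Set.disjoint_left.mp hdj hw1 hw2
  -- Step A : fibers of label have size ≤ 3k
  obtain ⟨TF, hTF1, hTF2⟩ := sparseTile_finset (k := k)
  have stepA : B.card ≤ (3 * k) * (B.image label).card := by
    apply Finset.card_le_mul_card_image
    intro p hp
    refine le_trans (Finset.card_le_card_of_injOn (fun z => z p.1 - p.2 p.1) ?_ ?_) hTF2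
    · intro z hz
      rw [Finset.mem_coe, Finset.mem_filter] at hz
      obtain ⟨hzB, hzl⟩ := hz
      obtain ⟨t, htT, hzt⟩ := hform z
      rw [hzl] at hzt
      have hzj : z p.1 = p.2 p.1 + t := by
        conv_lhs => rw [hzt]
        rw [Function.update_self]
      show z p.1 - p.2 p.1 ∈ TF
      rw [hzj]
      simpa using hTF1 t htT
    · intro z1 h1 z2 h2 heq
      simp only [Finset.coe_filter, Set.mem_setOf_eq] at h1 h2
      obtain ⟨t1, _, hz1⟩ := hform z1
      obtain ⟨t2, _, hz2⟩ := hform z2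
      rw [h1.2] at hz1
      rw [h2.2] at hz2
      simp only at heq
      have hjj : z1 p.1 = z2 p.1 := by omega
      funext i
      by_cases hi : i = p.1
      · subst hi
        exact hjj
      · conv_lhs => rw [hz1]
        conv_rhs => rw [hz2]
        rw [Function.update_of_ne hi, Function.update_of_ne hi]
  -- Step B : fibers of the line map have size ≤ k + 1
  set lineM : Fin d × (Fin d → ℤ) → Fin d × (Fin d → ℤ) :=
    fun p => (p.1, Function.update p.2 p.1 0) with hlineM
  have stepB : (B.image label).card ≤ (k + 1) * ((B.image label).image lineM).card := by
    apply Finset.card_le_mul_card_image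
    intro q hq
    have hIcc : (Finset.Icc (0 : ℤ) (k : ℤ)).card = k + 1 := by
      rw [Int.card_Icc]; omega
    rw [← hIcc]
    apply Finset.card_le_card_of_injOn
      (fun p => (p.2 p.1 + ((k : ℤ) ^ 2 + 2 * k - 1)) / ((k : ℤ) ^ 2 + 2 * k - 1))
    · intro p hp
      rw [Finset.mem_coe, Finset.mem_filter] at hp
      obtain ⟨hpI, hpq⟩ := hp
      obtain ⟨z, hzB, hzl⟩ := Finset.mem_image.mp hpI
      -- bounds on the offset a = p.2 p.1
      obtain ⟨t, htT, hzt⟩ := hform z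
      rw [hzl] at hzt
      have hzj : z p.1 = p.2 p.1 + t := by rw [hzt, Function.update_self]
      have htb := sparseTile_bounds hk1 htT
      have hzBj := (Fintype.mem_piFinset.mp hzB) p.1
      rw [Finset.mem_Icc] at hzBj
      rw [Finset.mem_coe, Finset.mem_Icc]
      constructor
      · apply Int.ediv_nonneg _ (le_of_lt hspan)
        omega
      · have hlt2 : p.2 p.1 + ((k : ℤ) ^ 2 + 2 * k - 1) <
            ((k : ℤ) + 1) * ((k : ℤ) ^ 2 + 2 * k - 1) := by
          have : p.2 p.1 + t ≤ (n : ℤ) - 1 := by omega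
          rw [hnZ] at this
          nlinarith
        have := (Int.ediv_lt_iff_lt_mul hspan).mpr hlt2
        beta_reduce
        omega
    · intro p1 hp1 p2 hp2 heq
      simp only [Finset.coe_filter, Set.mem_setOf_eq] at hp1 hp2
      obtain ⟨hp1I, hp1q⟩ := hp1
      obtain ⟨hp2I, hp2q⟩ := hp2
      obtain ⟨z1, hz1B, hz1l⟩ := Finset.mem_image.mp hp1I
      obtain ⟨z2, hz2B, hz2l⟩ := Finset.mem_image.mp hp2I
      -- same direction
      have hj : p1.1 = p2.1 := by
        have : (lineM p1).1 = (lineM p2).1 := by rw [hp1q, hp2q]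
        exact this
      -- same line
      have hline : ∀ i, i ≠ p1.1 → p1.2 i = p2.2 i := by
        intro i hi
        have h12 : Function.update p1.2 p1.1 0 = Function.update p2.2 p2.1 0 := by
          have : (lineM p1).2 = (lineM p2).2 := by rw [hp1q, hp2q]
          exact this
        have := congrFun h12 i
        rwa [Function.update_of_ne hi, Function.update_of_ne (hj ▸ hi)] at this
      -- offsets are close
      set D : ℤ := (k : ℤ) ^ 2 + 2 * (k : ℤ) - 1 with hD
      have hclose : |p1.2 p1.1 - p2.2 p2.1| < D := by
        set x1 : ℤ := p1.2 p1.1 + D with hx1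
        set x2 : ℤ := p2.2 p2.1 + D with hx2
        have e1 : D * (x1 / D) + x1 % D = x1 := Int.mul_ediv_add_emod x1 D
        have e2 : D * (x2 / D) + x2 % D = x2 := Int.mul_ediv_add_emod x2 D
        have hq12 : x1 / D = x2 / D := heq
        have e4 : D * (x1 / D) = D * (x2 / D) := by rw [hq12]
        have hm1a : 0 ≤ x1 % D := Int.emod_nonneg x1 (by positivity)
        have hm1b : x1 % D < D := Int.emod_lt_of_pos x1 hspan
        have hm2a : 0 ≤ x2 % D := Int.emod_nonneg x2 (by positivity)
        have hm2b : x2 % D < D := Int.emod_lt_of_pos x2 hspan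
        rw [abs_lt]
        constructor <;> linarith
      -- hence offsets are equal, otherwise contradiction with noclose
      rw [abs_lt] at hclose
      have hj2 : p2.2 p1.1 = p2.2 p2.1 := by rw [hj]
      have hp2eta : p2 = (p1.1, p2.2) := Prod.ext hj.symm rfl
      have haeq : p1.2 p1.1 = p2.2 p2.1 := by
        by_contra hane
        rcases lt_or_gt_of_ne hane with hlt | hgt
        · refine noclose z1 z2 p1.1 p1.2 p2.2 (by rw [hz1l]) ?_ hline ?_ ?_
          · rw [hz2l]; exact hp2eta
          · rw [hj2]; exact hlt
          · rw [hj2]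
            have h5 : p2.2 p2.1 - p1.2 p1.1 + 1 ≤ D :=
              Int.add_one_le_iff.mpr (by linarith [hclose.1])
            rw [hD] at h5
            linarith
        · refine noclose z2 z1 p1.1 p2.2 p1.2 (by rw [hz2l]; exact hp2eta)
            (by rw [hz1l]) ?_ ?_ ?_
          · intro i hi; exact (hline i hi).symm
          · rw [hj2]; exact hgt
          · rw [hj2]
            have h5 : p1.2 p1.1 - p2.2 p2.1 + 1 ≤ D :=
              Int.add_one_le_iff.mpr (by linarith [hclose.2])
            rw [hD] at h5
            linarith
      -- conclude p1 = p2
      have h2 : p1.2 = p2.2 := by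
        funext i
        by_cases hi : i = p1.1
        · subst hi; exact haeq.trans (by rw [hj])
        · exact hline i hi
      exact Prod.ext hj h2
  -- Step C : the number of lines is at most d * n^(d-1)
  have stepC : ((B.image label).image lineM).card ≤ d * n ^ (d - 1) := by
    set LF : Finset (Fin d × (Fin d → ℤ)) := Finset.univ.biUnion
      (fun j : Fin d => (Fintype.piFinset fun i => if i = j then ({0} : Finset ℤ)
        else Finset.Icc (0 : ℤ) ((n : ℤ) - 1)).image (fun w => (j, w))) with hLF
    have hsub : (B.image label).image lineM ⊆ LF := by
      intro q hq
      obtain ⟨p, hpI, hpq⟩ := Finset.mem_image.mp hq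
      obtain ⟨z, hzB, hzl⟩ := Finset.mem_image.mp hpI
      rw [hLF, Finset.mem_biUnion]
      refine ⟨p.1, Finset.mem_univ _, Finset.mem_image.mpr ⟨(lineM p).2, ?_, by
        rw [← hpq]⟩⟩
      rw [Fintype.mem_piFinset]
      intro i
      by_cases hi : i = p.1
      · subst hi
        simp [hlineM, Function.update_self]
      · rw [if_neg hi]
        have : (lineM p).2 i = p.2 i := Function.update_of_ne hi _ _
        rw [this, ← hzl]
        have := hoff z i (by rw [hzl]; exact hi)
        rw [hzl] at this
        rw [hzl, ← this]
        exact (Fintype.mem_piFinset.mp hzB) i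
    refine le_trans (Finset.card_le_card hsub) ?_
    refine le_trans (Finset.card_biUnion_le) ?_
    have hone : ∀ j : Fin d, ((Fintype.piFinset fun i => if i = j then ({0} : Finset ℤ)
        else Finset.Icc (0 : ℤ) ((n : ℤ) - 1)).image (fun w => (j, w))).card
        ≤ n ^ (d - 1) := by
      intro j
      refine le_trans Finset.card_image_le ?_
      rw [Fintype.card_piFinset]
      have : ∀ i : Fin d, (if i = j then ({0} : Finset ℤ)
          else Finset.Icc (0 : ℤ) ((n : ℤ) - 1)).card = if i = j then 1 else n := by
        intro i
        by_cases hi : i = j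
        · simp [hi]
        · simp [hi, Int.card_Icc]
      rw [Finset.prod_congr rfl (fun i _ => this i)]
      rw [← Finset.mul_prod_erase Finset.univ _ (Finset.mem_univ j), if_pos rfl, one_mul]
      rw [Finset.prod_congr rfl (fun i hi => if_neg (Finset.ne_of_mem_erase hi)),
        Finset.prod_const, Finset.card_erase_of_mem (Finset.mem_univ j),
        Finset.card_univ, Fintype.card_fin]
    refine le_trans (Finset.sum_le_sum (fun j _ => hone j)) ?_
    rw [Finset.sum_const, Finset.card_univ, Fintype.card_fin, smul_eq_mul]
  -- combine
  have hchain : n ^ d ≤ 3 * k * ((k + 1) * (d * n ^ (d - 1))) := by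
    calc n ^ d = B.card := hBcard.symm
      _ ≤ 3 * k * (B.image label).card := stepA
      _ ≤ 3 * k * ((k + 1) * ((B.image label).image lineM).card) := by
          apply Nat.mul_le_mul_left; exact stepB
      _ ≤ 3 * k * ((k + 1) * (d * n ^ (d - 1))) := by
          apply Nat.mul_le_mul_left
          apply Nat.mul_le_mul_left
          exact stepC
  have hpow : n ^ d = n ^ (d - 1) * n := by
    conv_lhs => rw [show d = (d - 1) + 1 by omega]
    rw [pow_succ]
  have hfinal : n ≤ 3 * k * (k + 1) * d := by
    rw [hpow] at hchain
    have h2 : 3 * k * ((k + 1) * (d * n ^ (d - 1))) = n ^ (d - 1) * (3 * k * (k + 1) * d) := by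
      ring
    rw [h2] at hchain
    have hp : 0 < n ^ (d - 1) := Nat.pow_pos (by omega)
    exact Nat.le_of_mul_le_mul_left hchain hp
  -- contradiction
  have hbig : 3 * k * (k + 1) * d < n := by
    zify
    rw [hnZ]
    have hd' : (1 : ℤ) ≤ (d : ℤ) := by exact_mod_cast hd
    have hkd : 6 * (d : ℤ) + 1 ≤ (k : ℤ) := by exact_mod_cast hk
    nlinarith
  omega
end

section
/- Any finite non-empty (possibly disconnected) tile T ⊂ ℤ^n tiles some connected tile in ℤ^{2n}: there exists a connected finite subset S ⊂ ℤ^{2n} that can be partitioned into copies of T (translates of T × {0}^n under coordinate permutations and translations). -/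
/-- Embed `ℤ^n` into `ℤ^d` (pad with zeros). -/
def embed {n d : ℕ} (t : Fin n → ℤ) : Fin d → ℤ :=
  fun j => if h : (j : ℕ) < n then t ⟨j, h⟩ else 0

/-- A copy of the tile `T ⊆ ℤ^n` in `ℤ^{2n}`: the image of `T × {0}^n` under
a permutation of coordinates followed by a translation. -/
def IsPermCopy {n : ℕ} (T : Set (Fin n → ℤ))
    (S : Set (Fin (2 * n) → ℤ)) : Prop :=
  ∃ (σ : Equiv.Perm (Fin (2 * n))) (y : Fin (2 * n) → ℤ),
    S = (fun t : Fin n → ℤ => fun j => embed t (σ j) + y j) '' T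

namespace DTC

def combine {n : ℕ} (u v : Fin n → ℤ) : Fin (2 * n) → ℤ :=
  fun j => if h : (j : ℕ) < n then u ⟨j, h⟩ else v ⟨(j : ℕ) - n, by have := j.isLt; omega⟩

def lo {n : ℕ} (z : Fin (2 * n) → ℤ) : Fin n → ℤ :=
  fun i => z ⟨(i : ℕ), by have := i.isLt; omega⟩

def hi {n : ℕ} (z : Fin (2 * n) → ℤ) : Fin n → ℤ :=
  fun i => z ⟨n + (i : ℕ), by have := i.isLt; omega⟩

lemma combine_lt {n : ℕ} (u v : Fin n → ℤ) (j : Fin (2 * n)) (h : (j : ℕ) < n) :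
    combine u v j = u ⟨j, h⟩ := dif_pos h

lemma combine_ge {n : ℕ} (u v : Fin n → ℤ) (j : Fin (2 * n)) (h : ¬ (j : ℕ) < n) :
    combine u v j = v ⟨(j : ℕ) - n, by have := j.isLt; omega⟩ := dif_neg h

@[simp] lemma lo_combine {n : ℕ} (u v : Fin n → ℤ) : lo (combine u v) = u := by
  funext i
  show combine u v ⟨(i : ℕ), _⟩ = u i
  rw [combine_lt u v _ (by simpa using i.isLt)]

@[simp] lemma hi_combine {n : ℕ} (u v : Fin n → ℤ) : hi (combine u v) = v := by
  funext i
  show combine u v ⟨n + (i : ℕ), _⟩ = v i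
  rw [combine_ge u v _ (by simp)]
  congr 1
  apply Fin.ext
  simp

lemma combine_lo_hi {n : ℕ} (z : Fin (2 * n) → ℤ) : combine (lo z) (hi z) = z := by
  funext j
  by_cases h : (j : ℕ) < n
  · rw [combine_lt _ _ _ h]
    exact congrArg z (Fin.ext rfl)
  · rw [combine_ge _ _ _ h]
    refine congrArg z (Fin.ext ?_)
    have := j.isLt
    simp only [Fin.val_mk]
    omega

def swapn (n : ℕ) : Equiv.Perm (Fin (2 * n)) where
  toFun j := ⟨if (j : ℕ) < n then (j : ℕ) + n else (j : ℕ) - n, by have := j.isLt; split_ifs <;> omega⟩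
  invFun j := ⟨if (j : ℕ) < n then (j : ℕ) + n else (j : ℕ) - n, by have := j.isLt; split_ifs <;> omega⟩
  left_inv j := by
    have := j.isLt
    apply Fin.ext
    simp only [Fin.val_mk]
    split_ifs <;> omega
  right_inv j := by
    have := j.isLt
    apply Fin.ext
    simp only [Fin.val_mk]
    split_ifs <;> omega


def box (n M : ℕ) : Set (Fin n → ℤ) := {y | ∀ i, (y i).natAbs ≤ M}

lemma box_finite (n M : ℕ) : (box n M).Finite := by
  apply Set.Finite.subset (Set.Finite.pi (fun _ : Fin n => Set.finite_Icc (-(M : ℤ)) M))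
  intro y hy
  simp only [Set.mem_pi, Set.mem_univ, Set.mem_Icc, forall_const]
  intro i
  have := hy i
  omega

def hcopy {n : ℕ} (T : Set (Fin n → ℤ)) (b : Fin n → ℤ) : Set (Fin (2 * n) → ℤ) :=
  (fun t => combine t b) '' T

def vcopy {n : ℕ} (T : Set (Fin n → ℤ)) (c : Fin n → ℤ) : Set (Fin (2 * n) → ℤ) :=
  (fun t => combine c t) '' T

lemma mem_hcopy {n : ℕ} {T : Set (Fin n → ℤ)} {b z} :
    z ∈ hcopy T b ↔ lo z ∈ T ∧ hi z = b := by
  constructor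
  · rintro ⟨t, ht, rfl⟩
    simp [ht]
  · rintro ⟨h1, h2⟩
    exact ⟨lo z, h1, by subst h2; exact combine_lo_hi z⟩

lemma mem_vcopy {n : ℕ} {T : Set (Fin n → ℤ)} {c z} :
    z ∈ vcopy T c ↔ lo z = c ∧ hi z ∈ T := by
  constructor
  · rintro ⟨t, ht, rfl⟩
    simp [ht]
  · rintro ⟨h1, h2⟩
    exact ⟨hi z, h2, by subst h1; exact combine_lo_hi z⟩

lemma isPermCopy_hcopy {n : ℕ} (T : Set (Fin n → ℤ)) (b : Fin n → ℤ) :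
    IsPermCopy T (hcopy T b) := by
  refine ⟨Equiv.refl _, combine 0 b, ?_⟩
  have hfun : (fun t : Fin n → ℤ => fun j => embed t ((Equiv.refl (Fin (2 * n))) j) + combine 0 b j)
      = fun t => combine t b := by
    funext t j
    by_cases h : (j : ℕ) < n
    · rw [combine_lt t b j h, Equiv.refl_apply]
      rw [show embed t j = t ⟨j, h⟩ from dif_pos h, combine_lt 0 b j h]
      simp
    · rw [combine_ge t b j h, Equiv.refl_apply]
      rw [show embed t j = 0 from dif_neg h, combine_ge 0 b j h]
      simp
  rw [hfun]
  rfl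

lemma isPermCopy_vcopy {n : ℕ} (T : Set (Fin n → ℤ)) (c : Fin n → ℤ) :
    IsPermCopy T (vcopy T c) := by
  refine ⟨swapn n, combine c 0, ?_⟩
  have hfun : (fun t : Fin n → ℤ => fun j => embed t ((swapn n) j) + combine c 0 j)
      = fun t => combine c t := by
    funext t j
    have hj := j.isLt
    by_cases h : (j : ℕ) < n
    · rw [combine_lt c t j h, combine_lt c 0 j h]
      have : embed t (swapn n j) = 0 := by
        apply dif_neg
        show ¬ ((⟨if (j : ℕ) < n then (j : ℕ) + n else (j : ℕ) - n, _⟩ : Fin (2 * n)) : ℕ) < n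
        simp only [Fin.val_mk]
        split_ifs <;> omega
      rw [this]
      simp
    · rw [combine_ge c t j h, combine_ge c 0 j h]
      have hs : ((swapn n j : Fin (2 * n)) : ℕ) = (j : ℕ) - n := by
        show ((⟨if (j : ℕ) < n then (j : ℕ) + n else (j : ℕ) - n, _⟩ : Fin (2 * n)) : ℕ) = _
        simp [h]
      have hlt : ((swapn n j : Fin (2 * n)) : ℕ) < n := by omega
      have he : embed t (swapn n j) = t ⟨((swapn n j : Fin (2 * n)) : ℕ), hlt⟩ := dif_pos hlt
      rw [he]
      have : (⟨((swapn n j : Fin (2 * n)) : ℕ), hlt⟩ : Fin n) = ⟨(j : ℕ) - n, by omega⟩ := by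
        apply Fin.ext; simp [hs]
      rw [this]
      simp
  rw [hfun]
  rfl


lemma dist_update {N : ℕ} (a : Fin N → ℤ) (j : Fin N) (u v : ℤ) :
    (∑ i, |Function.update a j u i - Function.update a j v i|) = |u - v| := by
  rw [Finset.sum_eq_single j]
  · simp
  · intro i _ hij
    rw [Function.update_of_ne hij, Function.update_of_ne hij]
    simp
  · intro h
    exact absurd (Finset.mem_univ j) h

lemma chain_aux {N : ℕ} {S : Set (Fin N → ℤ)} (a : Fin N → ℤ) (j : Fin N) (v : ℤ) :
    ∀ (k : ℕ) (u : ℤ), (v - u).natAbs = k →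
      (∀ w, min u v ≤ w → w ≤ max u v → Function.update a j w ∈ S) →
      Relation.ReflTransGen (fun x y => x ∈ S ∧ y ∈ S ∧ (∑ i, |x i - y i|) = 1)
        (Function.update a j u) (Function.update a j v) := by
  intro k
  induction k with
  | zero =>
    intro u hk _
    have : u = v := by omega
    subst this
    exact Relation.ReflTransGen.refl
  | succ k ih =>
    intro u hk H
    obtain ⟨u', habs, hmin, hmax, hk'⟩ :
        ∃ u', |u - u'| = 1 ∧ min u v ≤ min u' v ∧ max u' v ≤ max u v ∧ (v - u').natAbs = k := by
      rcases (by omega : u < v ∨ v < u) with h | h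
      · exact ⟨u + 1, by rw [show u - (u + 1) = -1 by ring]; norm_num, by omega, by omega, by omega⟩
      · exact ⟨u - 1, by rw [show u - (u - 1) = 1 by ring]; norm_num, by omega, by omega, by omega⟩
    refine Relation.ReflTransGen.head
      ⟨H u (by omega) (by omega), H u' (by omega) (by omega), ?_⟩
      (ih u' hk' (fun w hw1 hw2 => H w (by omega) (by omega)))
    rw [dist_update]
    exact habs

lemma chain {N : ℕ} {S : Set (Fin N → ℤ)} (a : Fin N → ℤ) (j : Fin N) (u v : ℤ)
    (H : ∀ w, min u v ≤ w → w ≤ max u v → Function.update a j w ∈ S) :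
    Relation.ReflTransGen (fun x y => x ∈ S ∧ y ∈ S ∧ (∑ i, |x i - y i|) = 1)
      (Function.update a j u) (Function.update a j v) :=
  chain_aux a j v (v - u).natAbs u rfl H


lemma update_combine_hi {n : ℕ} (u v : Fin n → ℤ) (k : ℕ) (hkn : k < n) (w : ℤ) :
    Function.update (combine u v) ⟨n + k, by omega⟩ w
      = combine u (Function.update v ⟨k, hkn⟩ w) := by
  funext j
  rcases eq_or_ne j ⟨n + k, by omega⟩ with rfl | hne
  · rw [Function.update_self, combine_ge _ _ _ (by simp)]
    have : (⟨(((⟨n + k, by omega⟩ : Fin (2 * n)) : ℕ)) - n, by omega⟩ : Fin n) = ⟨k, hkn⟩ := by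
      apply Fin.ext; simp
    rw [this, Function.update_self]
  · rw [Function.update_of_ne hne]
    by_cases h : (j : ℕ) < n
    · rw [combine_lt _ _ _ h, combine_lt _ _ _ h]
    · rw [combine_ge _ _ _ h, combine_ge _ _ _ h]
      rw [Function.update_of_ne]
      intro hc
      apply hne
      apply Fin.ext
      have := j.isLt
      have hval : (j : ℕ) - n = k := by
        have := congrArg (fun x : Fin n => (x : ℕ)) hc
        simpa using this
      simp
      omega

lemma update_combine_lo {n : ℕ} (u v : Fin n → ℤ) (k : ℕ) (hkn : k < n) (w : ℤ) :
    Function.update (combine u v) ⟨k, by omega⟩ w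
      = combine (Function.update u ⟨k, hkn⟩ w) v := by
  funext j
  rcases eq_or_ne j ⟨k, by omega⟩ with rfl | hne
  · rw [Function.update_self, combine_lt _ _ _ (by simpa using hkn)]
    have : (⟨(((⟨k, by omega⟩ : Fin (2 * n)) : ℕ)), by simpa using hkn⟩ : Fin n) = ⟨k, hkn⟩ := by
      apply Fin.ext; simp
    rw [this, Function.update_self]
  · rw [Function.update_of_ne hne]
    by_cases h : (j : ℕ) < n
    · rw [combine_lt _ _ _ h, combine_lt _ _ _ h]
      rw [Function.update_of_ne]
      intro hc
      apply hne
      apply Fin.ext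
      have hval : (j : ℕ) = k := by
        have := congrArg (fun x : Fin n => (x : ℕ)) hc
        simpa using this
      simpa using hval
    · rw [combine_ge _ _ _ h, combine_ge _ _ _ h]

lemma moveHi {n M : ℕ} {S : Set (Fin (2 * n) → ℤ)} {T : Set (Fin n → ℤ)}
    (mem1 : ∀ z, lo z ∈ T → hi z ∈ box n M → z ∈ S)
    {u b b' : Fin n → ℤ} (hu : u ∈ T) (hb : b ∈ box n M) (hb' : b' ∈ box n M) :
    Relation.ReflTransGen (fun x y => x ∈ S ∧ y ∈ S ∧ (∑ i, |x i - y i|) = 1)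
      (combine u b) (combine u b') := by
  have key : ∀ k : ℕ, k ≤ n →
      Relation.ReflTransGen (fun x y => x ∈ S ∧ y ∈ S ∧ (∑ i, |x i - y i|) = 1)
        (combine u b) (combine u (fun i => if (i : ℕ) < k then b' i else b i)) := by
    intro k
    induction k with
    | zero =>
      intro _
      have he : (fun i : Fin n => if (i : ℕ) < 0 then b' i else b i) = b := by
        funext i; simp
      rw [he]
    | succ k ih =>
      intro hk1
      have hkn : k < n := hk1
      refine (ih (le_of_lt hkn)).trans ?_
      set mixk : Fin n → ℤ := fun i => if (i : ℕ) < k then b' i else b i with hmixk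
      have hbox : mixk ∈ box n M := by
        intro i
        by_cases hik : (i : ℕ) < k
        · simpa [hmixk, hik] using hb' i
        · simpa [hmixk, hik] using hb i
      have e0 : mixk = Function.update mixk ⟨k, hkn⟩ (b ⟨k, hkn⟩) := by
        rw [show b ⟨k, hkn⟩ = mixk ⟨k, hkn⟩ by simp [hmixk], Function.update_eq_self]
      have e1 : (fun i : Fin n => if (i : ℕ) < k + 1 then b' i else b i)
          = Function.update mixk ⟨k, hkn⟩ (b' ⟨k, hkn⟩) := by
        funext i
        rcases eq_or_ne i ⟨k, hkn⟩ with rfl | hne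
        · simp
        · rw [Function.update_of_ne hne]
          have : (i : ℕ) ≠ k := fun hc => hne (Fin.ext hc)
          simp only [hmixk]
          split_ifs <;> first | rfl | omega
      rw [e1, show combine u mixk = combine u (Function.update mixk ⟨k, hkn⟩ (b ⟨k, hkn⟩)) from by rw [← e0]]
      rw [← update_combine_hi u mixk k hkn, ← update_combine_hi u mixk k hkn]
      apply chain
      intro w hw1 hw2
      rw [update_combine_hi u mixk k hkn]
      apply mem1
      · simp [hu]
      · rw [hi_combine]
        intro i
        rcases eq_or_ne i ⟨k, hkn⟩ with rfl | hne
        · rw [Function.update_self]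
          have h1 := hb ⟨k, hkn⟩
          have h2 := hb' ⟨k, hkn⟩
          omega
        · rw [Function.update_of_ne hne]
          exact hbox i
  have := key n le_rfl
  have he : (fun i : Fin n => if (i : ℕ) < n then b' i else b i) = b' := by
    funext i; simp [i.isLt]
  rwa [he] at this

lemma moveLo {n M : ℕ} {S : Set (Fin (2 * n) → ℤ)} {T : Set (Fin n → ℤ)}
    (mem2 : ∀ z, lo z ∈ box n M → hi z ∈ T → z ∈ S)
    {v b b' : Fin n → ℤ} (hv : v ∈ T) (hb : b ∈ box n M) (hb' : b' ∈ box n M) :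
    Relation.ReflTransGen (fun x y => x ∈ S ∧ y ∈ S ∧ (∑ i, |x i - y i|) = 1)
      (combine b v) (combine b' v) := by
  have key : ∀ k : ℕ, k ≤ n →
      Relation.ReflTransGen (fun x y => x ∈ S ∧ y ∈ S ∧ (∑ i, |x i - y i|) = 1)
        (combine b v) (combine (fun i => if (i : ℕ) < k then b' i else b i) v) := by
    intro k
    induction k with
    | zero =>
      intro _
      have he : (fun i : Fin n => if (i : ℕ) < 0 then b' i else b i) = b := by
        funext i; simp
      rw [he]
    | succ k ih =>
      intro hk1
      have hkn : k < n := hk1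
      refine (ih (le_of_lt hkn)).trans ?_
      set mixk : Fin n → ℤ := fun i => if (i : ℕ) < k then b' i else b i with hmixk
      have hbox : mixk ∈ box n M := by
        intro i
        by_cases hik : (i : ℕ) < k
        · simpa [hmixk, hik] using hb' i
        · simpa [hmixk, hik] using hb i
      have e0 : mixk = Function.update mixk ⟨k, hkn⟩ (b ⟨k, hkn⟩) := by
        rw [show b ⟨k, hkn⟩ = mixk ⟨k, hkn⟩ by simp [hmixk], Function.update_eq_self]
      have e1 : (fun i : Fin n => if (i : ℕ) < k + 1 then b' i else b i)
          = Function.update mixk ⟨k, hkn⟩ (b' ⟨k, hkn⟩) := by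
        funext i
        rcases eq_or_ne i ⟨k, hkn⟩ with rfl | hne
        · simp
        · rw [Function.update_of_ne hne]
          have : (i : ℕ) ≠ k := fun hc => hne (Fin.ext hc)
          simp only [hmixk]
          split_ifs <;> first | rfl | omega
      rw [e1, show combine mixk v = combine (Function.update mixk ⟨k, hkn⟩ (b ⟨k, hkn⟩)) v from by rw [← e0]]
      rw [← update_combine_lo mixk v k hkn, ← update_combine_lo mixk v k hkn]
      apply chain
      intro w hw1 hw2
      rw [update_combine_lo mixk v k hkn]
      apply mem2
      · rw [lo_combine]
        intro i
        rcases eq_or_ne i ⟨k, hkn⟩ with rfl | hne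
        · rw [Function.update_self]
          have h1 := hb ⟨k, hkn⟩
          have h2 := hb' ⟨k, hkn⟩
          omega
        · rw [Function.update_of_ne hne]
          exact hbox i
      · simp [hv]
  have := key n le_rfl
  have he : (fun i : Fin n => if (i : ℕ) < n then b' i else b i) = b' := by
    funext i; simp [i.isLt]
  rwa [he] at this


end DTC

open DTC

/-- every finite non-empty (possibly disconnected) tile
`T ⊆ ℤ^n` tiles some connected finite tile `S ⊆ ℤ^{2n}`: `S` is connected in
the ℓ¹-adjacency graph and partitions into copies of `T`. -/
theorem disconnected_tile_tiles_connected {n : ℕ} (T : Set (Fin n → ℤ))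
    (hfin : T.Finite) (hne : T.Nonempty) :
    ∃ S : Set (Fin (2 * n) → ℤ),
      S.Finite ∧ S.Nonempty ∧
      (∀ x ∈ S, ∀ y ∈ S,
        Relation.ReflTransGen
          (fun a b => a ∈ S ∧ b ∈ S ∧ (∑ i, |a i - b i|) = 1) x y) ∧
      ∃ P : Set (Set (Fin (2 * n) → ℤ)),
        (∀ Q ∈ P, IsPermCopy T Q) ∧ P.PairwiseDisjoint id ∧ ⋃₀ P = S := by
  classical
  obtain ⟨t0, ht0⟩ := hne
  obtain ⟨M, hM⟩ : ∃ M : ℕ, ∀ t ∈ T, ∀ i, (t i).natAbs ≤ M := by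
    refine ⟨hfin.toFinset.sup (fun t => Finset.univ.sup (fun i => (t i).natAbs)), ?_⟩
    intro t ht i
    calc (t i).natAbs ≤ Finset.univ.sup (fun i => (t i).natAbs) :=
          Finset.le_sup (f := fun i => (t i).natAbs) (Finset.mem_univ i)
      _ ≤ _ := Finset.le_sup (f := fun t => Finset.univ.sup (fun i => (t i).natAbs)) (hfin.mem_toFinset.mpr ht)
  have hTB : T ⊆ box n M := fun t ht i => hM t ht i
  set P : Set (Set (Fin (2 * n) → ℤ)) :=
    (hcopy T '' box n M) ∪ (vcopy T '' (box n M \ T)) with hPdef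
  set S : Set (Fin (2 * n) → ℤ) := ⋃₀ P with hSdef
  -- membership characterization
  have memS : ∀ z, z ∈ S ↔ (lo z ∈ T ∧ hi z ∈ box n M) ∨ (lo z ∈ box n M ∧ hi z ∈ T) := by
    intro z
    constructor
    · rintro ⟨Q, hQ, hz⟩
      rcases hQ with ⟨b, hb, rfl⟩ | ⟨c, hc, rfl⟩
      · obtain ⟨h1, h2⟩ := mem_hcopy.mp hz
        exact Or.inl ⟨h1, h2 ▸ hb⟩
      · obtain ⟨h1, h2⟩ := mem_vcopy.mp hz
        exact Or.inr ⟨h1 ▸ hc.1, h2⟩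
    · rintro (⟨h1, h2⟩ | ⟨h1, h2⟩)
      · exact ⟨hcopy T (hi z), Or.inl ⟨hi z, h2, rfl⟩, mem_hcopy.mpr ⟨h1, rfl⟩⟩
      · by_cases hT : lo z ∈ T
        · exact ⟨hcopy T (hi z), Or.inl ⟨hi z, hTB h2, rfl⟩, mem_hcopy.mpr ⟨hT, rfl⟩⟩
        · exact ⟨vcopy T (lo z), Or.inr ⟨lo z, ⟨h1, hT⟩, rfl⟩, mem_vcopy.mpr ⟨rfl, h2⟩⟩
  have mem1 : ∀ z, lo z ∈ T → hi z ∈ box n M → z ∈ S :=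
    fun z h1 h2 => (memS z).mpr (Or.inl ⟨h1, h2⟩)
  have mem2 : ∀ z, lo z ∈ box n M → hi z ∈ T → z ∈ S :=
    fun z h1 h2 => (memS z).mpr (Or.inr ⟨h1, h2⟩)
  refine ⟨S, ?_, ?_, ?_, P, ?_, ?_, rfl⟩
  -- finite
  · apply Set.Finite.subset (Set.Finite.pi (fun _ : Fin (2 * n) => Set.finite_Icc (-(M : ℤ)) M))
    intro z hz
    simp only [Set.mem_pi, Set.mem_univ, Set.mem_Icc, forall_const]
    intro j
    have hj := j.isLt
    have hzb : lo z ∈ box n M ∧ hi z ∈ box n M := by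
      rcases (memS z).mp hz with ⟨h1, h2⟩ | ⟨h1, h2⟩
      · exact ⟨hTB h1, h2⟩
      · exact ⟨h1, hTB h2⟩
    by_cases h : (j : ℕ) < n
    · have := hzb.1 ⟨(j : ℕ), h⟩
      have hzz : lo z ⟨(j : ℕ), h⟩ = z j := congrArg z (Fin.ext rfl)
      rw [hzz] at this
      omega
    · have := hzb.2 ⟨(j : ℕ) - n, by omega⟩
      have hzz : hi z ⟨(j : ℕ) - n, by omega⟩ = z j := congrArg z (Fin.ext (by simp; omega))
      rw [hzz] at this
      omega
  -- nonempty
  · exact ⟨combine t0 t0, mem1 _ (by simp [ht0]) (by simp [hTB ht0])⟩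
  -- connected
  · have hsymm : Symmetric (fun a b : Fin (2 * n) → ℤ => a ∈ S ∧ b ∈ S ∧ (∑ i, |a i - b i|) = 1) := by
      intro a b ⟨h1, h2, h3⟩
      refine ⟨h2, h1, ?_⟩
      rw [← h3]
      exact Finset.sum_congr rfl (fun i _ => abs_sub_comm _ _)
    have hcan : ∀ x ∈ S,
        Relation.ReflTransGen
          (fun a b => a ∈ S ∧ b ∈ S ∧ (∑ i, |a i - b i|) = 1) x (combine t0 t0) := by
      intro x hx
      have hxc : x = combine (lo x) (hi x) := (combine_lo_hi x).symm
      rcases (memS x).mp hx with ⟨h1, h2⟩ | ⟨h1, h2⟩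
      · have p1 := moveHi mem1 h1 h2 (hTB ht0)
        have p2 := moveLo mem2 ht0 (hTB h1) (hTB ht0)
        rw [← hxc] at p1
        exact p1.trans p2
      · have p1 := moveLo mem2 h2 h1 (hTB ht0)
        have p2 := moveHi mem1 ht0 (hTB h2) (hTB ht0)
        rw [← hxc] at p1
        exact p1.trans p2
    intro x hx y hy
    exact (hcan x hx).trans ((@Relation.ReflTransGen.symmetric _ _ ⟨fun a b h => hsymm h⟩).symm _ _ (hcan y hy))
  -- copies
  · rintro Q (⟨b, _, rfl⟩ | ⟨c, _, rfl⟩)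
    · exact isPermCopy_hcopy T b
    · exact isPermCopy_vcopy T c
  -- pairwise disjoint
  · rintro Q hQ Q' hQ' hne
    refine Set.disjoint_left.mpr ?_
    intro z hz hz'
    rcases hQ with ⟨b, hb, rfl⟩ | ⟨c, hc, rfl⟩ <;> rcases hQ' with ⟨b', hb', rfl⟩ | ⟨c', hc', rfl⟩
    · obtain ⟨_, h2⟩ := mem_hcopy.mp hz
      obtain ⟨_, h2'⟩ := mem_hcopy.mp hz'
      exact hne (by rw [← h2, ← h2'])
    · obtain ⟨h1, _⟩ := mem_hcopy.mp hz
      obtain ⟨h1', _⟩ := mem_vcopy.mp hz'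
      exact hc'.2 (h1' ▸ h1)
    · obtain ⟨h1, _⟩ := mem_vcopy.mp hz
      obtain ⟨h1', _⟩ := mem_hcopy.mp hz'
      exact hc.2 (h1 ▸ h1')
    · obtain ⟨h1, _⟩ := mem_vcopy.mp hz
      obtain ⟨h1', _⟩ := mem_vcopy.mp hz'
      exact hne (by rw [← h1, ← h1'])
end
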